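/- Let V = U^⊤U be as above and let S̆ ∈ ℝ^{(2n−1)×(2n−1)} be the matrix with entries s̆_{ij} = (δ_{ij}+1)/(n−1) when i, j ∈ [n] or when i, j ∈ {n+1,…,2n−1}, and s̆_{ij} = −1/(n−1) otherwise (where δ_{ij} is the Kronecker delta). Then there is an absolute constant C₀ > 0 such that max_{i,j} |(V^{-1})_{ij} − s̆_{ij}| ≤ C₀/(n−1)² for all n ≥ 3. -/

import Mathlib

set_option maxHeartbeats 1000000


open Matrix

noncomputable def Umat (n : ℕ) : Matrix (Fin n × Fin n) (Fin n ⊕ Fin (n - 1)) ℝ :=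
  fun p c =>
    if p.1 = p.2 then 0
    else
      match c with
      | Sum.inl k => if k = p.1 then 1 else 0
      | Sum.inr l => if (p.2 : ℕ) = (l : ℕ) then 1 else 0

noncomputable def Vmat (n : ℕ) : Matrix (Fin n ⊕ Fin (n - 1)) (Fin n ⊕ Fin (n - 1)) ℝ :=
  (Umat n)ᵀ * Umat n

/-- The block approximation `S̆` of `V⁻¹`: entries `(δ_{ab} + 1)/(n-1)` on the two diagonal
blocks and `-1/(n-1)` on the off-diagonal blocks. -/
noncomputable def breveS (n : ℕ) : Matrix (Fin n ⊕ Fin (n - 1)) (Fin n ⊕ Fin (n - 1)) ℝ :=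
  fun a b =>
    match a, b with
    | Sum.inl i, Sum.inl j => ((if i = j then (1:ℝ) else 0) + 1) / ((n : ℝ) - 1)
    | Sum.inr l, Sum.inr l' => ((if l = l' then (1:ℝ) else 0) + 1) / ((n : ℝ) - 1)
    | Sum.inl _, Sum.inr _ => -1 / ((n : ℝ) - 1)
    | Sum.inr _, Sum.inl _ => -1 / ((n : ℝ) - 1)

lemma sum_range_ite (N x : ℕ) (A B : ℝ) (hx : x < N) :
    ∑ l ∈ Finset.range N, (if x = l then A else B) = A + ((N:ℝ)-1)*B := by
  have h : ∀ l ∈ Finset.range N, (if x = l then A else B)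
      = B + (if x = l then A - B else 0) := by
    intro l _; split_ifs <;> ring
  rw [Finset.sum_congr rfl h, Finset.sum_add_distrib, Finset.sum_const,
    Finset.sum_ite_eq _ x (fun _ => A - B), if_pos (Finset.mem_range.2 hx),
    Finset.card_range]
  ring

lemma sum_range_ite2 (N x y : ℕ) (A B C : ℝ) (hx : x < N) (hy : y < N) (hxy : x ≠ y) :
    ∑ l ∈ Finset.range N, (if x = l then A else if y = l then B else C)
      = A + B + ((N:ℝ)-2)*C := by
  have h : ∀ l ∈ Finset.range N, (if x = l then A else if y = l then B else C)
      = C + (if x = l then A - C else 0) + (if y = l then B - C else 0) := by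
    intro l _
    rcases eq_or_ne x l with h1 | h1 <;> rcases eq_or_ne y l with h2 | h2 <;>
      simp_all <;> ring
  rw [Finset.sum_congr rfl h]
  rw [Finset.sum_add_distrib, Finset.sum_add_distrib, Finset.sum_const,
    Finset.sum_ite_eq _ x (fun _ => A - C), Finset.sum_ite_eq _ y (fun _ => B - C),
    if_pos (Finset.mem_range.2 hx), if_pos (Finset.mem_range.2 hy), Finset.card_range]
  ring

lemma fin_inner_sum (n : ℕ) (x : Fin n) (c : ℝ) :
    ∑ j : Fin n, (if x = j then 0 else c) = ((n:ℝ)-1)*c := by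
  have h : ∀ j : Fin n, (if x = j then (0:ℝ) else c)
      = (fun t => if (x:ℕ) = t then (0:ℝ) else c) (j:ℕ) := by
    intro j; simp [Fin.ext_iff]
  rw [Finset.sum_congr rfl (fun j _ => h j)]
  exact (Fin.sum_univ_eq_sum_range (fun t => if (x:ℕ) = t then (0:ℝ) else c) n).trans
    (by rw [sum_range_ite n x 0 c x.isLt]; ring)

/-- inner sum used for the `inr` column of `Umat`. -/
lemma fin_inner_sum' (n : ℕ) (hn : 1 ≤ n) (x : Fin n) (w : ℕ) (hw : w < n) :
    ∑ j : Fin n, (if x = j then (0:ℝ) else if (j:ℕ) = w then 1 else 0)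
      = if (x:ℕ) = w then 0 else 1 := by
  have h : ∀ j : Fin n, (if x = j then (0:ℝ) else if (j:ℕ) = w then 1 else 0)
      = (fun t => if (x:ℕ) = t then (0:ℝ) else if w = t then 1 else 0) (j:ℕ) := by
    intro j; simp only [Fin.ext_iff]
    rcases eq_or_ne ((x:ℕ)) ((j:ℕ)) with h1|h1 <;> rcases eq_or_ne ((j:ℕ)) w with h2|h2 <;>
      simp_all [eq_comm]
  rw [Finset.sum_congr rfl (fun j _ => h j)]
  refine (Fin.sum_univ_eq_sum_range (fun t => if (x:ℕ) = t then (0:ℝ) else if w = t then 1 else 0) n).trans ?_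
  rcases eq_or_ne ((x:ℕ)) w with hxw | hxw
  · subst hxw
    rw [if_pos rfl]
    have : ∀ t ∈ Finset.range n, (if (x:ℕ) = t then (0:ℝ) else if (x:ℕ) = t then 1 else 0)
        = 0 := by intro t _; split_ifs <;> rfl
    rw [Finset.sum_congr rfl this, Finset.sum_const, smul_zero]
  · rw [if_neg hxw, sum_range_ite2 n x w 0 1 0 x.isLt hw hxw]
    ring

lemma vLL (n : ℕ) (k k' : Fin n) :
    Vmat n (Sum.inl k) (Sum.inl k') = if k = k' then ((n:ℝ)-1) else 0 := by
  rw [Vmat, mul_apply, Fintype.sum_prod_type]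
  simp only [transpose_apply, Umat]
  have h1 : ∀ x : Fin n,
      (∑ y : Fin n, (if x = y then (0:ℝ) else if k = x then 1 else 0) *
        (if x = y then 0 else if k' = x then 1 else 0))
      = ((n:ℝ)-1) * (if k = x then (if k = k' then 1 else 0) else 0) := by
    intro x
    have h2 : ∀ y : Fin n, (if x = y then (0:ℝ) else if k = x then 1 else 0) *
        (if x = y then 0 else if k' = x then 1 else 0)
        = (if x = y then 0 else (if k = x then (if k = k' then (1:ℝ) else 0) else 0)) := by
      intro y
      rcases eq_or_ne x y with h|h <;> rcases eq_or_ne k x with h3|h3 <;>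
        rcases eq_or_ne k' x with h4|h4 <;> simp_all [eq_comm] <;> tauto
    rw [Finset.sum_congr rfl (fun y _ => h2 y), fin_inner_sum]
  rw [Finset.sum_congr rfl (fun x _ => h1 x), ← Finset.mul_sum,
    Finset.sum_ite_eq _ k (fun _ => if k = k' then (1:ℝ) else 0), if_pos (Finset.mem_univ k)]
  split_ifs <;> ring

lemma vLR (n : ℕ) (hn : 2 ≤ n) (k : Fin n) (l : Fin (n-1)) :
    Vmat n (Sum.inl k) (Sum.inr l) = if (k:ℕ) = (l:ℕ) then 0 else 1 := by
  have hl : (l:ℕ) < n := lt_of_lt_of_le l.isLt (Nat.sub_le n 1)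
  rw [Vmat, mul_apply, Fintype.sum_prod_type]
  simp only [transpose_apply, Umat]
  have h1 : ∀ x : Fin n,
      (∑ y : Fin n, (if x = y then (0:ℝ) else if k = x then 1 else 0) *
        (if x = y then 0 else if (y:ℕ) = (l:ℕ) then 1 else 0))
      = (if k = x then (if (x:ℕ) = (l:ℕ) then (0:ℝ) else 1) else 0) := by
    intro x
    have h2 : ∀ y : Fin n, (if x = y then (0:ℝ) else if k = x then 1 else 0) *
        (if x = y then 0 else if (y:ℕ) = (l:ℕ) then 1 else 0)
        = (if k = x then (1:ℝ) else 0) *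
          (if x = y then (0:ℝ) else if (y:ℕ) = (l:ℕ) then 1 else 0) := by
      intro y; split_ifs <;> ring
    rw [Finset.sum_congr rfl (fun y _ => h2 y), ← Finset.mul_sum,
      fin_inner_sum' n (by omega) x l hl]
    split_ifs <;> ring
  rw [Finset.sum_congr rfl (fun x _ => h1 x),
    Finset.sum_ite_eq _ k (fun x => if (x:ℕ) = (l:ℕ) then (0:ℝ) else 1),
    if_pos (Finset.mem_univ k)]

lemma vRL (n : ℕ) (hn : 2 ≤ n) (k : Fin n) (l : Fin (n-1)) :
    Vmat n (Sum.inr l) (Sum.inl k) = if (k:ℕ) = (l:ℕ) then 0 else 1 := by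
  have : Vmat n (Sum.inr l) (Sum.inl k) = Vmat n (Sum.inl k) (Sum.inr l) := by
    rw [Vmat]
    show ((Umat n)ᵀ * Umat n) (Sum.inr l) (Sum.inl k) = _
    rw [mul_apply, mul_apply]
    apply Finset.sum_congr rfl
    intro p _
    simp [transpose_apply, mul_comm]
  rw [this, vLR n hn]

lemma vRR (n : ℕ) (hn : 2 ≤ n) (l l' : Fin (n-1)) :
    Vmat n (Sum.inr l) (Sum.inr l') = if l = l' then ((n:ℝ)-1) else 0 := by
  have hl : (l:ℕ) < n := lt_of_lt_of_le l.isLt (Nat.sub_le n 1)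
  rw [Vmat, mul_apply, Fintype.sum_prod_type]
  simp only [transpose_apply, Umat]
  rcases eq_or_ne l l' with h | h
  · subst h
    rw [if_pos rfl]
    have h1 : ∀ x : Fin n,
        (∑ y : Fin n, (if x = y then (0:ℝ) else if (y:ℕ) = (l:ℕ) then 1 else 0) *
          (if x = y then 0 else if (y:ℕ) = (l:ℕ) then 1 else 0))
        = (if (x:ℕ) = (l:ℕ) then (0:ℝ) else 1) := by
      intro x
      have h2 : ∀ y : Fin n, (if x = y then (0:ℝ) else if (y:ℕ) = (l:ℕ) then 1 else 0) *
          (if x = y then 0 else if (y:ℕ) = (l:ℕ) then 1 else 0)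
          = (if x = y then (0:ℝ) else if (y:ℕ) = (l:ℕ) then 1 else 0) := by
        intro y; split_ifs <;> ring
      rw [Finset.sum_congr rfl (fun y _ => h2 y), fin_inner_sum' n (by omega) x l hl]
    rw [Finset.sum_congr rfl (fun x _ => h1 x)]
    have h3 : ∀ x : Fin n, (if (x:ℕ) = (l:ℕ) then (0:ℝ) else 1)
        = (fun t => if (l:ℕ) = t then (0:ℝ) else 1) (x:ℕ) := by
      intro x; simp [eq_comm]
    rw [Finset.sum_congr rfl (fun x _ => h3 x)]
    exact (Fin.sum_univ_eq_sum_range (fun t => if (l:ℕ) = t then (0:ℝ) else 1) n).trans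
      (by rw [sum_range_ite n l 0 1 hl]; ring)
  · rw [if_neg h]
    have hne : (l:ℕ) ≠ (l':ℕ) := fun hc => h (Fin.ext hc)
    have h1 : ∀ x : Fin n,
        (∑ y : Fin n, (if x = y then (0:ℝ) else if (y:ℕ) = (l:ℕ) then 1 else 0) *
          (if x = y then 0 else if (y:ℕ) = (l':ℕ) then 1 else 0)) = 0 := by
      intro x
      have h2 : ∀ y : Fin n, (if x = y then (0:ℝ) else if (y:ℕ) = (l:ℕ) then 1 else 0) *
          (if x = y then 0 else if (y:ℕ) = (l':ℕ) then 1 else 0) = 0 := by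
        intro y
        rcases eq_or_ne x y with h3|h3
        · simp [h3]
        · rcases eq_or_ne ((y:ℕ)) ((l:ℕ)) with h4|h4 <;>
            rcases eq_or_ne ((y:ℕ)) ((l':ℕ)) with h5|h5 <;> simp_all <;>
            first
            | exact absurd (h4.symm.trans h5) hne
            | skip
      rw [Finset.sum_congr rfl (fun y _ => h2 y), Finset.sum_const, smul_zero]
    rw [Finset.sum_congr rfl (fun x _ => h1 x), Finset.sum_const, smul_zero]

/-! ### The explicit inverse -/

noncomputable def wMix (n : ℕ) (s t : ℕ) : ℝ :=
  if s = n - 1 then -1 / ((n:ℝ) - 2)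
  else if s = t then -1 / (n:ℝ) else -((n:ℝ)-1) / (((n:ℝ)-2) * (n:ℝ))

noncomputable def wLL (n : ℕ) (s t : ℕ) : ℝ :=
  if s = n-1 ∨ t = n-1 then
    (if s = t then (2*((n:ℝ)-1)-1)/(((n:ℝ)-1)*((n:ℝ)-2)) else 1/((n:ℝ)-1))
  else if s = t then (2*((n:ℝ)-1)+1)/(((n:ℝ)-1)*(n:ℝ))
  else (((n:ℝ)-1)*((n:ℝ)-2)-1)/(((n:ℝ)-1)*(n:ℝ)*((n:ℝ)-2))

noncomputable def wRR (n : ℕ) (s t : ℕ) : ℝ :=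
  ((if s = t then (1:ℝ) else 0) + 1) * ((n:ℝ)-1) / (((n:ℝ)-2) * (n:ℝ))

noncomputable def Wmat (n : ℕ) : Matrix (Fin n ⊕ Fin (n - 1)) (Fin n ⊕ Fin (n - 1)) ℝ :=
  fun a b =>
    match a, b with
    | Sum.inl i, Sum.inl j => wLL n (i:ℕ) (j:ℕ)
    | Sum.inl i, Sum.inr l => wMix n (i:ℕ) (l:ℕ)
    | Sum.inr l, Sum.inl i => wMix n (i:ℕ) (l:ℕ)
    | Sum.inr l, Sum.inr l' => wRR n (l:ℕ) (l':ℕ)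

/-! ### Row/column sums -/

lemma sumA {N : ℕ} (i : Fin N) (c : ℝ) (f : Fin N → ℝ) :
    ∑ k : Fin N, (if i = k then c else 0) * f k = c * f i := by
  have h : ∀ k : Fin N, (if i = k then c else 0) * f k = if i = k then c * f k else 0 := by
    intro k; split_ifs <;> ring
  rw [Finset.sum_congr rfl (fun k _ => h k),
    Finset.sum_ite_eq _ i (fun k => c * f k), if_pos (Finset.mem_univ i)]

lemma sumB (N x : ℕ) (g : ℕ → ℝ) :
    ∑ t ∈ Finset.range N, (if x = t then (0:ℝ) else 1) * g t
      = (∑ t ∈ Finset.range N, g t) - (if x < N then g x else 0) := by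
  have h : ∀ t ∈ Finset.range N, (if x = t then (0:ℝ) else 1) * g t
      = g t - (if x = t then g t else 0) := by
    intro t _; split_ifs <;> ring
  rw [Finset.sum_congr rfl h, Finset.sum_sub_distrib, Finset.sum_ite_eq _ x g]
  congr 1
  simp [Finset.mem_range]

lemma S1 (n x : ℕ) (hn : 3 ≤ n) (hx : x < n) :
    ∑ t ∈ Finset.range (n-1), wMix n x t
      = if x = n-1 then -((n:ℝ)-1)/((n:ℝ)-2) else -1 := by
  have h3 : (3:ℝ) ≤ (n:ℝ) := by exact_mod_cast hn
  have hc : ((n-1:ℕ):ℝ) = (n:ℝ) - 1 := by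
    rw [Nat.cast_sub (by omega : 1 ≤ n), Nat.cast_one]
  rcases eq_or_ne x (n-1) with hx1 | hx1
  · rw [if_pos hx1]
    have h : ∀ t ∈ Finset.range (n-1), wMix n x t = -1/((n:ℝ)-2) := by
      intro t _; simp [wMix, hx1]
    rw [Finset.sum_congr rfl h, Finset.sum_const, Finset.card_range, nsmul_eq_mul, hc]
    field_simp
  · rw [if_neg hx1]
    have h : ∀ t ∈ Finset.range (n-1), wMix n x t
        = if x = t then -1/(n:ℝ) else -((n:ℝ)-1)/(((n:ℝ)-2)*(n:ℝ)) := by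
      intro t _; simp [wMix, hx1]
    rw [Finset.sum_congr rfl h,
      sum_range_ite (n-1) x (-1/(n:ℝ)) (-((n:ℝ)-1)/(((n:ℝ)-2)*(n:ℝ))) (by omega), hc]
    have hn0 : (n:ℝ) ≠ 0 := by linarith
    have hm1 : (n:ℝ) - 2 ≠ 0 := by linarith
    field_simp
    ring

lemma S2 (n y : ℕ) (hn : 3 ≤ n) (hy : y < n-1) :
    ∑ t ∈ Finset.range (n-1), wRR n t y = ((n:ℝ)-1)/((n:ℝ)-2) := by
  have h3 : (3:ℝ) ≤ (n:ℝ) := by exact_mod_cast hn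
  have hc : ((n-1:ℕ):ℝ) = (n:ℝ) - 1 := by
    rw [Nat.cast_sub (by omega : 1 ≤ n), Nat.cast_one]
  have h : ∀ t ∈ Finset.range (n-1), wRR n t y
      = if y = t then 2*((n:ℝ)-1)/(((n:ℝ)-2)*(n:ℝ)) else ((n:ℝ)-1)/(((n:ℝ)-2)*(n:ℝ)) := by
    intro t _
    rcases eq_or_ne y t with h1 | h1
    · rw [if_pos h1, wRR, if_pos h1.symm]; ring
    · rw [if_neg h1, wRR, if_neg (fun hc => h1 hc.symm)]; ring
  rw [Finset.sum_congr rfl h, sum_range_ite (n-1) y _ _ hy, hc]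
  have hn0 : (n:ℝ) ≠ 0 := by linarith
  have hm1 : (n:ℝ) - 2 ≠ 0 := by linarith
  field_simp
  ring

lemma S3 (n y : ℕ) (hn : 3 ≤ n) (hy : y < n) :
    ∑ t ∈ Finset.range n, wLL n t y
      = if y = n-1 then (((n:ℝ)-1)*((n:ℝ)-1) + ((n:ℝ)-1) - 1)/(((n:ℝ)-1)*((n:ℝ)-2))
        else (n:ℝ)/((n:ℝ)-1) := by
  have h3 : (3:ℝ) ≤ (n:ℝ) := by exact_mod_cast hn
  have hn0 : (n:ℝ) ≠ 0 := by linarith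
  have hm0 : (n:ℝ) - 1 ≠ 0 := by linarith
  have hm1 : (n:ℝ) - 2 ≠ 0 := by linarith
  rcases eq_or_ne y (n-1) with hy1 | hy1
  · rw [if_pos hy1]
    have h : ∀ t ∈ Finset.range n, wLL n t y
        = if y = t then (2*((n:ℝ)-1)-1)/(((n:ℝ)-1)*((n:ℝ)-2)) else 1/((n:ℝ)-1) := by
      intro t _
      rcases eq_or_ne y t with h1 | h1
      · rw [if_pos h1, wLL, if_pos (Or.inr (h1 ▸ hy1)), if_pos h1.symm]
      · rw [if_neg h1, wLL]
        by_cases h2 : t = n-1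
        · rw [if_pos (Or.inl h2), if_neg (fun hc => h1 hc.symm)]
        · rw [if_pos (Or.inr hy1), if_neg (fun hc => h1 hc.symm)]
    rw [Finset.sum_congr rfl h, sum_range_ite n y _ _ hy]
    field_simp
    ring
  · rw [if_neg hy1]
    have h : ∀ t ∈ Finset.range n, wLL n t y
        = if n-1 = t then 1/((n:ℝ)-1)
          else if y = t then (2*((n:ℝ)-1)+1)/(((n:ℝ)-1)*(n:ℝ))
          else (((n:ℝ)-1)*((n:ℝ)-2)-1)/(((n:ℝ)-1)*(n:ℝ)*((n:ℝ)-2)) := by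
      intro t _
      rcases eq_or_ne t (n-1) with h1 | h1
      · rw [if_pos h1.symm, wLL, if_pos (Or.inl h1),
          if_neg (show ¬ t = y by omega)]
      · rw [if_neg (fun hc => h1 hc.symm), wLL,
          if_neg (show ¬ (t = n-1 ∨ y = n-1) by tauto)]
        rcases eq_or_ne t y with h2 | h2
        · rw [if_pos h2, if_pos h2.symm]
        · rw [if_neg h2, if_neg (fun hc => h2 hc.symm)]
    rw [Finset.sum_congr rfl h, sum_range_ite2 n (n-1) y _ _ _ (by omega) hy (by omega)]
    have hc : ((n-1:ℕ):ℝ) = (n:ℝ) - 1 := by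
      rw [Nat.cast_sub (by omega : 1 ≤ n), Nat.cast_one]
    field_simp
    ring

lemma S4 (n y : ℕ) (hn : 3 ≤ n) (hy : y < n-1) :
    ∑ t ∈ Finset.range n, wMix n t y = -((n:ℝ)-1)/((n:ℝ)-2) := by
  have h3 : (3:ℝ) ≤ (n:ℝ) := by exact_mod_cast hn
  have hn0 : (n:ℝ) ≠ 0 := by linarith
  have hm1 : (n:ℝ) - 2 ≠ 0 := by linarith
  have h : ∀ t ∈ Finset.range n, wMix n t y
      = if n-1 = t then -1/((n:ℝ)-2)
        else if y = t then -1/(n:ℝ) else -((n:ℝ)-1)/(((n:ℝ)-2)*(n:ℝ)) := by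
    intro t _
    rcases eq_or_ne t (n-1) with h1 | h1
    · rw [if_pos h1.symm, wMix, if_pos h1]
    · rw [if_neg (fun hc => h1 hc.symm), wMix, if_neg h1]
      rcases eq_or_ne t y with h2 | h2
      · rw [if_pos h2, if_pos h2.symm]
      · rw [if_neg h2, if_neg (fun hc => h2 hc.symm)]
  rw [Finset.sum_congr rfl h, sum_range_ite2 n (n-1) y _ _ _ (by omega) (by omega) (by omega)]
  field_simp
  ring

lemma VW (n : ℕ) (hn : 3 ≤ n) : Vmat n * Wmat n = 1 := by
  have h2n : 2 ≤ n := by omega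
  have h3 : (3:ℝ) ≤ (n:ℝ) := by exact_mod_cast hn
  have hn0 : (n:ℝ) ≠ 0 := by linarith
  have hm0 : (n:ℝ) - 1 ≠ 0 := by linarith
  have hm1 : (n:ℝ) - 2 ≠ 0 := by linarith
  ext a b
  rw [Matrix.mul_apply, Fintype.sum_sum_type]
  rcases a with i | l <;> rcases b with j | l'
  · -- a = inl i, b = inl j
    have e1 : ∑ k : Fin n, Vmat n (Sum.inl i) (Sum.inl k) * Wmat n (Sum.inl k) (Sum.inl j)
        = ((n:ℝ)-1) * wLL n (i:ℕ) (j:ℕ) := by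
      have h : ∀ k : Fin n, Vmat n (Sum.inl i) (Sum.inl k) * Wmat n (Sum.inl k) (Sum.inl j)
          = (if i = k then ((n:ℝ)-1) else 0) * wLL n (k:ℕ) (j:ℕ) := by
        intro k; rw [vLL]; rfl
      rw [Finset.sum_congr rfl (fun k _ => h k), sumA i ((n:ℝ)-1) (fun k => wLL n (k:ℕ) (j:ℕ))]
    have e2 : ∑ l : Fin (n-1), Vmat n (Sum.inl i) (Sum.inr l) * Wmat n (Sum.inr l) (Sum.inl j)
        = (∑ t ∈ Finset.range (n-1), wMix n (j:ℕ) t)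
          - (if (i:ℕ) < n-1 then wMix n (j:ℕ) (i:ℕ) else 0) := by
      have h : ∀ l : Fin (n-1), Vmat n (Sum.inl i) (Sum.inr l) * Wmat n (Sum.inr l) (Sum.inl j)
          = (fun t => (if (i:ℕ) = t then (0:ℝ) else 1) * wMix n (j:ℕ) t) (l:ℕ) := by
        intro l; rw [vLR n h2n]; rfl
      rw [Finset.sum_congr rfl (fun l _ => h l)]
      exact (Fin.sum_univ_eq_sum_range
          (fun t => (if (i:ℕ) = t then (0:ℝ) else 1) * wMix n (j:ℕ) t) (n-1)).trans
        (sumB (n-1) (i:ℕ) (fun t => wMix n (j:ℕ) t))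
    rw [e1, e2, S1 n (j:ℕ) hn j.isLt, Matrix.one_apply]
    simp only [Sum.inl.injEq, Fin.ext_iff]
    by_cases hi : (i:ℕ) = n-1 <;> by_cases hj : (j:ℕ) = n-1
    · have hij : (i:ℕ) = (j:ℕ) := hi.trans hj.symm
      simp only [wLL, hi, hj, hij, if_true, or_self, if_pos rfl,
        if_neg (show ¬ (n-1 < n-1) by omega)]
      field_simp
      ring
    · have hij : ¬ ((i:ℕ) = (j:ℕ)) := by omega
      simp only [wLL, hi, hj, hij, if_true, if_false, or_true, true_or, or_false, false_or,
        if_neg (show ¬ (n-1 < n-1) by omega), if_neg (show ¬ (n-1 = (j:ℕ)) by omega)]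
      field_simp
      ring
    · have hij : ¬ ((i:ℕ) = (j:ℕ)) := by omega
      simp only [wLL, wMix, hi, hj, hij, if_true, if_false, or_true, true_or, or_false,
        false_or, if_pos (show (i:ℕ) < n-1 by omega),
        if_neg (show ¬ ((i:ℕ) = n-1) by omega), if_pos (show (j:ℕ) = n-1 from hj)]
      field_simp
      ring
    · simp only [wLL, wMix, hi, hj, if_false, or_self, false_or, or_false,
        if_pos (show (i:ℕ) < n-1 by omega)]
      by_cases hij : (i:ℕ) = (j:ℕ)
      · simp only [hij, if_pos rfl, if_pos (show (j:ℕ) = (i:ℕ) by omega), ↓reduceIte]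
        field_simp
        ring
      · simp only [hij, if_false, if_neg (show ¬ ((j:ℕ) = (i:ℕ)) by omega)]
        field_simp
        ring
  · -- a = inl i, b = inr l'
    have e1 : ∑ k : Fin n, Vmat n (Sum.inl i) (Sum.inl k) * Wmat n (Sum.inl k) (Sum.inr l')
        = ((n:ℝ)-1) * wMix n (i:ℕ) (l':ℕ) := by
      have h : ∀ k : Fin n, Vmat n (Sum.inl i) (Sum.inl k) * Wmat n (Sum.inl k) (Sum.inr l')
          = (if i = k then ((n:ℝ)-1) else 0) * wMix n (k:ℕ) (l':ℕ) := by
        intro k; rw [vLL]; rfl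
      rw [Finset.sum_congr rfl (fun k _ => h k), sumA i ((n:ℝ)-1) (fun k => wMix n (k:ℕ) (l':ℕ))]
    have e2 : ∑ l : Fin (n-1), Vmat n (Sum.inl i) (Sum.inr l) * Wmat n (Sum.inr l) (Sum.inr l')
        = (∑ t ∈ Finset.range (n-1), wRR n t (l':ℕ))
          - (if (i:ℕ) < n-1 then wRR n (i:ℕ) (l':ℕ) else 0) := by
      have h : ∀ l : Fin (n-1), Vmat n (Sum.inl i) (Sum.inr l) * Wmat n (Sum.inr l) (Sum.inr l')
          = (fun t => (if (i:ℕ) = t then (0:ℝ) else 1) * wRR n t (l':ℕ)) (l:ℕ) := by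
        intro l; rw [vLR n h2n]; rfl
      rw [Finset.sum_congr rfl (fun l _ => h l)]
      exact (Fin.sum_univ_eq_sum_range
          (fun t => (if (i:ℕ) = t then (0:ℝ) else 1) * wRR n t (l':ℕ)) (n-1)).trans
        (sumB (n-1) (i:ℕ) (fun t => wRR n t (l':ℕ)))
    rw [e1, e2, S2 n (l':ℕ) hn l'.isLt, Matrix.one_apply]
    simp only [reduceCtorEq, if_false]
    by_cases hi : (i:ℕ) = n-1
    · simp only [wMix, hi, if_pos rfl, if_neg (show ¬ (n-1 < n-1) by omega), ↓reduceIte]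
      field_simp
      ring
    · by_cases hil : (i:ℕ) = (l':ℕ)
      · simp only [wMix, wRR, hi, hil, if_false, if_pos rfl, ↓reduceIte,
          if_pos (show (i:ℕ) < n-1 by omega), if_pos (show (l':ℕ) < n-1 from l'.isLt),
          if_neg (show ¬ ((l':ℕ) = n-1) by have := l'.isLt; omega)]
        field_simp
        ring
      · simp only [wMix, wRR, hi, hil, if_false,
          if_pos (show (i:ℕ) < n-1 by omega)]
        field_simp
        ring
  · -- a = inr l, b = inl j
    have e1 : ∑ k : Fin n, Vmat n (Sum.inr l) (Sum.inl k) * Wmat n (Sum.inl k) (Sum.inl j)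
        = (∑ t ∈ Finset.range n, wLL n t (j:ℕ))
          - (if (l:ℕ) < n then wLL n (l:ℕ) (j:ℕ) else 0) := by
      have h : ∀ k : Fin n, Vmat n (Sum.inr l) (Sum.inl k) * Wmat n (Sum.inl k) (Sum.inl j)
          = (fun t => (if (l:ℕ) = t then (0:ℝ) else 1) * wLL n t (j:ℕ)) (k:ℕ) := by
        intro k
        rw [vRL n h2n]
        show (if (k:ℕ) = (l:ℕ) then (0:ℝ) else 1) * wLL n (k:ℕ) (j:ℕ) = _
        rw [if_congr (show ((k:ℕ) = (l:ℕ)) ↔ ((l:ℕ) = (k:ℕ)) from eq_comm) rfl rfl]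
      rw [Finset.sum_congr rfl (fun k _ => h k)]
      exact (Fin.sum_univ_eq_sum_range
          (fun t => (if (l:ℕ) = t then (0:ℝ) else 1) * wLL n t (j:ℕ)) n).trans
        (sumB n (l:ℕ) (fun t => wLL n t (j:ℕ)))
    have e2 : ∑ l'' : Fin (n-1), Vmat n (Sum.inr l) (Sum.inr l'') * Wmat n (Sum.inr l'') (Sum.inl j)
        = ((n:ℝ)-1) * wMix n (j:ℕ) (l:ℕ) := by
      have h : ∀ l'' : Fin (n-1), Vmat n (Sum.inr l) (Sum.inr l'') * Wmat n (Sum.inr l'') (Sum.inl j)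
          = (if l = l'' then ((n:ℝ)-1) else 0) * wMix n (j:ℕ) (l'':ℕ) := by
        intro l''; rw [vRR n h2n]; rfl
      rw [Finset.sum_congr rfl (fun l'' _ => h l''),
        sumA l ((n:ℝ)-1) (fun l'' => wMix n (j:ℕ) (l'':ℕ))]
    rw [e1, e2, S3 n (j:ℕ) hn j.isLt, Matrix.one_apply]
    simp only [reduceCtorEq, if_false, if_pos (show (l:ℕ) < n by omega)]
    have hl : ¬ ((l:ℕ) = n-1) := by have := l.isLt; omega
    by_cases hj : (j:ℕ) = n-1
    · simp only [wLL, wMix, hj, if_true, or_true, if_pos rfl, hl, if_false,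
        if_neg (show ¬ ((l:ℕ) = (j:ℕ)) by omega)]
      field_simp
      ring
    · by_cases hlj : (l:ℕ) = (j:ℕ)
      · simp only [wLL, wMix, hj, hl, hlj, if_false, or_self, if_pos rfl, ↓reduceIte,
          if_pos (show (j:ℕ) = (l:ℕ) by omega)]
        field_simp
        ring
      · simp only [wLL, wMix, hj, hl, hlj, if_false, or_self,
          if_neg (show ¬ ((j:ℕ) = (l:ℕ)) by omega)]
        field_simp
        ring
  · -- a = inr l, b = inr l'
    have e1 : ∑ k : Fin n, Vmat n (Sum.inr l) (Sum.inl k) * Wmat n (Sum.inl k) (Sum.inr l')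
        = (∑ t ∈ Finset.range n, wMix n t (l':ℕ))
          - (if (l:ℕ) < n then wMix n (l:ℕ) (l':ℕ) else 0) := by
      have h : ∀ k : Fin n, Vmat n (Sum.inr l) (Sum.inl k) * Wmat n (Sum.inl k) (Sum.inr l')
          = (fun t => (if (l:ℕ) = t then (0:ℝ) else 1) * wMix n t (l':ℕ)) (k:ℕ) := by
        intro k
        rw [vRL n h2n]
        show (if (k:ℕ) = (l:ℕ) then (0:ℝ) else 1) * wMix n (k:ℕ) (l':ℕ) = _
        rw [if_congr (show ((k:ℕ) = (l:ℕ)) ↔ ((l:ℕ) = (k:ℕ)) from eq_comm) rfl rfl]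
      rw [Finset.sum_congr rfl (fun k _ => h k)]
      exact (Fin.sum_univ_eq_sum_range
          (fun t => (if (l:ℕ) = t then (0:ℝ) else 1) * wMix n t (l':ℕ)) n).trans
        (sumB n (l:ℕ) (fun t => wMix n t (l':ℕ)))
    have e2 : ∑ l'' : Fin (n-1), Vmat n (Sum.inr l) (Sum.inr l'') * Wmat n (Sum.inr l'') (Sum.inr l')
        = ((n:ℝ)-1) * wRR n (l:ℕ) (l':ℕ) := by
      have h : ∀ l'' : Fin (n-1), Vmat n (Sum.inr l) (Sum.inr l'') * Wmat n (Sum.inr l'') (Sum.inr l')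
          = (if l = l'' then ((n:ℝ)-1) else 0) * wRR n (l'':ℕ) (l':ℕ) := by
        intro l''; rw [vRR n h2n]; rfl
      rw [Finset.sum_congr rfl (fun l'' _ => h l''),
        sumA l ((n:ℝ)-1) (fun l'' => wRR n (l'':ℕ) (l':ℕ))]
    rw [e1, e2, S4 n (l':ℕ) hn l'.isLt, Matrix.one_apply]
    have hl : ¬ ((l:ℕ) = n-1) := by have := l.isLt; omega
    simp only [Sum.inr.injEq, Fin.ext_iff, if_pos (show (l:ℕ) < n by omega)]
    by_cases hll : (l:ℕ) = (l':ℕ)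
    · simp only [wMix, wRR, hll, hl, if_false, if_pos rfl, if_true,
        if_neg (show ¬ ((l':ℕ) = n-1) by have := l'.isLt; omega)]
      field_simp
      ring
    · simp only [wMix, wRR, hll, hl, if_false]
      field_simp
      ring

theorem stmt6 :
    ∃ C₀ : ℝ, 0 < C₀ ∧ ∀ n : ℕ, 3 ≤ n →
      ∀ a b : Fin n ⊕ Fin (n - 1),
        |(Vmat n)⁻¹ a b - breveS n a b| ≤ C₀ / ((n : ℝ) - 1) ^ 2 := by
  refine ⟨4, by norm_num, ?_⟩
  intro n hn a b
  have h3 : (3:ℝ) ≤ (n:ℝ) := by exact_mod_cast hn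
  have hn0 : (n:ℝ) ≠ 0 := by linarith
  have hm0 : (n:ℝ) - 1 ≠ 0 := by linarith
  have hm1 : (n:ℝ) - 2 ≠ 0 := by linarith
  have hp1 : (0:ℝ) < (n:ℝ)-1 := by linarith
  have hp2 : (0:ℝ) < (n:ℝ)-2 := by linarith
  have hpn : (0:ℝ) < (n:ℝ) := by linarith
  have hp12 : (0:ℝ) < ((n:ℝ)-1)*((n:ℝ)-2) := mul_pos hp1 hp2
  have hp1n : (0:ℝ) < ((n:ℝ)-1)*(n:ℝ) := mul_pos hp1 hpn
  have hpn2 : (0:ℝ) < (n:ℝ)*((n:ℝ)-2) := mul_pos hpn hp2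
  have hp123 : (0:ℝ) < ((n:ℝ)-1)*((n:ℝ)-2)*(n:ℝ) := mul_pos hp12 hpn
  have hpsq : (0:ℝ) < ((n:ℝ)-1)^2 := by positivity
  have f12 : ((n:ℝ)-1)^2 ≤ 4*(((n:ℝ)-1)*((n:ℝ)-2)) := by nlinarith [sq_nonneg ((n:ℝ)-3)]
  have f1n : ((n:ℝ)-1)^2 ≤ 4*(((n:ℝ)-1)*(n:ℝ)) := by nlinarith [sq_nonneg ((n:ℝ)-3)]
  have fn2 : ((n:ℝ)-1)^2 ≤ 4*((n:ℝ)*((n:ℝ)-2)) := by nlinarith [sq_nonneg ((n:ℝ)-3)]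
  have f123 : ((n:ℝ)-1)^2 ≤ 4*(((n:ℝ)-1)*((n:ℝ)-2)*(n:ℝ)) := by
    nlinarith [mul_nonneg (mul_nonneg hp1.le hp2.le) (by linarith : (0:ℝ) ≤ (n:ℝ)-3),
      sq_nonneg ((n:ℝ)-3)]
  have g123 : 2*((n:ℝ)-1)^2 ≤ 4*(((n:ℝ)-1)*((n:ℝ)-2)*(n:ℝ)) := by
    nlinarith [mul_nonneg (mul_nonneg hp1.le hp2.le) (by linarith : (0:ℝ) ≤ (n:ℝ)-3),
      sq_nonneg ((n:ℝ)-3)]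
  rw [Matrix.inv_eq_right_inv (VW n hn)]
  rcases a with i | l <;> rcases b with j | l'
  · -- LL
    by_cases hi : (i:ℕ) = n-1 <;> by_cases hj : (j:ℕ) = n-1
    · have hij : i = j := Fin.ext (by omega)
      have hd : Wmat n (Sum.inl i) (Sum.inl j) - breveS n (Sum.inl i) (Sum.inl j)
          = 1/(((n:ℝ)-1)*((n:ℝ)-2)) := by
        simp only [Wmat, breveS, wLL, if_pos (Or.inl hi),
          if_pos (show (i:ℕ) = (j:ℕ) by omega), if_pos hij]
        field_simp
        ring
      rw [hd, abs_of_pos (one_div_pos.mpr (by linarith)),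
        div_le_div_iff₀ (by linarith) (by linarith)]
      linarith [f12, f1n, fn2, f123, g123]
    · have hij : ¬ (i = j) := by rw [Fin.ext_iff]; omega
      have hd : Wmat n (Sum.inl i) (Sum.inl j) - breveS n (Sum.inl i) (Sum.inl j) = 0 := by
        simp only [Wmat, breveS, wLL, if_pos (Or.inl hi),
          if_neg (show ¬ ((i:ℕ) = (j:ℕ)) by omega), if_neg hij]
        field_simp
        ring
      rw [hd, abs_zero]
      positivity
    · have hij : ¬ (i = j) := by rw [Fin.ext_iff]; omega
      have hd : Wmat n (Sum.inl i) (Sum.inl j) - breveS n (Sum.inl i) (Sum.inl j) = 0 := by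
        simp only [Wmat, breveS, wLL, if_pos (Or.inr hj),
          if_neg (show ¬ ((i:ℕ) = (j:ℕ)) by omega), if_neg hij]
        field_simp
        ring
      rw [hd, abs_zero]
      positivity
    · by_cases hij : i = j
      · have hd : Wmat n (Sum.inl i) (Sum.inl j) - breveS n (Sum.inl i) (Sum.inl j)
            = -(1/(((n:ℝ)-1)*(n:ℝ))) := by
          simp only [Wmat, breveS, wLL, if_neg (show ¬ ((i:ℕ) = n-1 ∨ (j:ℕ) = n-1) by tauto),
            if_pos (show (i:ℕ) = (j:ℕ) from hij ▸ rfl), if_pos hij]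
          field_simp
          ring
        rw [hd, abs_neg, abs_of_pos (one_div_pos.mpr (by linarith)),
          div_le_div_iff₀ (by linarith) (by linarith)]
        linarith [f12, f1n, fn2, f123, g123]
      · have hd : Wmat n (Sum.inl i) (Sum.inl j) - breveS n (Sum.inl i) (Sum.inl j)
            = -(1/((n:ℝ)*((n:ℝ)-2))) := by
          simp only [Wmat, breveS, wLL, if_neg (show ¬ ((i:ℕ) = n-1 ∨ (j:ℕ) = n-1) by tauto),
            if_neg (show ¬ ((i:ℕ) = (j:ℕ)) from fun h => hij (Fin.ext h)), if_neg hij]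
          field_simp
          ring
        rw [hd, abs_neg, abs_of_pos (one_div_pos.mpr (by linarith)),
          div_le_div_iff₀ (by linarith) (by linarith)]
        linarith [f12, f1n, fn2, f123, g123]
  · -- LR
    by_cases hi : (i:ℕ) = n-1
    · have hd : Wmat n (Sum.inl i) (Sum.inr l') - breveS n (Sum.inl i) (Sum.inr l')
          = -(1/(((n:ℝ)-1)*((n:ℝ)-2))) := by
        simp only [Wmat, breveS, wMix, if_pos hi]
        field_simp
        ring
      rw [hd, abs_neg, abs_of_pos (one_div_pos.mpr (by linarith)),
        div_le_div_iff₀ (by linarith) (by linarith)]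
      linarith [f12, f1n, fn2, f123, g123]
    · by_cases hil : (i:ℕ) = (l':ℕ)
      · have hd : Wmat n (Sum.inl i) (Sum.inr l') - breveS n (Sum.inl i) (Sum.inr l')
            = 1/(((n:ℝ)-1)*(n:ℝ)) := by
          simp only [Wmat, breveS, wMix, if_neg hi, if_pos hil]
          field_simp
          ring
        rw [hd, abs_of_pos (one_div_pos.mpr (by linarith)),
          div_le_div_iff₀ (by linarith) (by linarith)]
        linarith [f12, f1n, fn2, f123, g123]
      · have hd : Wmat n (Sum.inl i) (Sum.inr l') - breveS n (Sum.inl i) (Sum.inr l')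
            = -(1/(((n:ℝ)-1)*((n:ℝ)-2)*(n:ℝ))) := by
          simp only [Wmat, breveS, wMix, if_neg hi, if_neg hil]
          field_simp
          ring
        rw [hd, abs_neg, abs_of_pos (one_div_pos.mpr (by linarith)),
          div_le_div_iff₀ (by linarith) (by linarith)]
        linarith [f12, f1n, fn2, f123, g123]
  · -- RL
    by_cases hj : (j:ℕ) = n-1
    · have hd : Wmat n (Sum.inr l) (Sum.inl j) - breveS n (Sum.inr l) (Sum.inl j)
          = -(1/(((n:ℝ)-1)*((n:ℝ)-2))) := by
        simp only [Wmat, breveS, wMix, if_pos hj]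
        field_simp
        ring
      rw [hd, abs_neg, abs_of_pos (one_div_pos.mpr (by linarith)),
        div_le_div_iff₀ (by linarith) (by linarith)]
      linarith [f12, f1n, fn2, f123, g123]
    · by_cases hjl : (j:ℕ) = (l:ℕ)
      · have hd : Wmat n (Sum.inr l) (Sum.inl j) - breveS n (Sum.inr l) (Sum.inl j)
            = 1/(((n:ℝ)-1)*(n:ℝ)) := by
          simp only [Wmat, breveS, wMix, if_neg hj, if_pos hjl]
          field_simp
          ring
        rw [hd, abs_of_pos (one_div_pos.mpr (by linarith)),
          div_le_div_iff₀ (by linarith) (by linarith)]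
        linarith [f12, f1n, fn2, f123, g123]
      · have hd : Wmat n (Sum.inr l) (Sum.inl j) - breveS n (Sum.inr l) (Sum.inl j)
            = -(1/(((n:ℝ)-1)*((n:ℝ)-2)*(n:ℝ))) := by
          simp only [Wmat, breveS, wMix, if_neg hj, if_neg hjl]
          field_simp
          ring
        rw [hd, abs_neg, abs_of_pos (one_div_pos.mpr (by linarith)),
          div_le_div_iff₀ (by linarith) (by linarith)]
        linarith [f12, f1n, fn2, f123, g123]
  · -- RR
    by_cases hll : l = l'
    · have hd : Wmat n (Sum.inr l) (Sum.inr l') - breveS n (Sum.inr l) (Sum.inr l')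
          = 2/(((n:ℝ)-1)*((n:ℝ)-2)*(n:ℝ)) := by
        simp only [Wmat, breveS, wRR, if_pos (show (l:ℕ) = (l':ℕ) from hll ▸ rfl), if_pos hll]
        field_simp
        ring
      rw [hd, abs_of_pos (div_pos (by norm_num) (by linarith)),
        div_le_div_iff₀ (by linarith) (by linarith)]
      linarith [f12, f1n, fn2, f123, g123]
    · have hd : Wmat n (Sum.inr l) (Sum.inr l') - breveS n (Sum.inr l) (Sum.inr l')
          = 1/(((n:ℝ)-1)*((n:ℝ)-2)*(n:ℝ)) := by
        simp only [Wmat, breveS, wRR,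
          if_neg (show ¬ ((l:ℕ) = (l':ℕ)) from fun h => hll (Fin.ext h)), if_neg hll]
        field_simp
        ring
      rw [hd, abs_of_pos (one_div_pos.mpr (by linarith)),
        div_le_div_iff₀ (by linarith) (by linarith)]
      linarith [f12, f1n, fn2, f123, g123]
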